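/- Suppose distinct positive integers x_1,…,x_9, each of the form 2^a·q^b for a fixed odd prime q with a ≤ 2, satisfy 1/x_1 + ⋯ + 1/x_9 = 1, q divides at least one x_i, and the maximal q-adic valuation among the x_i is attained exactly twice. Then q = 3 or q = 5. -/

import Mathlib

lemma aux_stmt13 (q : ℕ) (hq : q.Prime) (hqodd : Odd q) (u v : ℕ)
    (hu : u ≤ 2) (hv : v ≤ 2) (huv : u ≠ v) (h : q ∣ 2 ^ u + 2 ^ v) :
    q = 3 ∨ q = 5 := by
  have hle : q ≤ 2 ^ u + 2 ^ v := Nat.le_of_dvd (by positivity) h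
  have h2 : 2 ≤ q := hq.two_le
  interval_cases u <;> interval_cases v <;> norm_num at h hle <;>
    interval_cases q <;> first
      | (left; rfl) | (right; rfl)
      | (exfalso; revert h; decide) | (exfalso; revert hq; decide)
      | (exfalso; revert hqodd; decide)

theorem stmt_13 (q : ℕ) (hq : q.Prime) (hqodd : Odd q)
    (x : Fin 9 → ℕ) (hinj : Function.Injective x) (hx : ∀ i, 0 < x i)
    (hform : ∀ i, ∃ a b : ℕ, a ≤ 2 ∧ x i = 2 ^ a * q ^ b)
    (hsum : ∑ i, (1 : ℚ) / x i = 1)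
    (hdvd : ∃ i, q ∣ x i)
    (htwice : (Finset.univ.filter
      (fun i => padicValNat q (x i) =
        Finset.univ.sup (fun j => padicValNat q (x j)))).card = 2) :
    q = 3 ∨ q = 5 := by
  classical
  haveI : Fact q.Prime := ⟨hq⟩
  choose a b ha hxeq using hform
  have hq2 : q ≠ 2 := by
    rintro rfl; exact (Nat.not_odd_iff_even.mpr even_two) hqodd
  have hnd : ∀ n : ℕ, ¬ q ∣ 2 ^ n := by
    intro n hdv
    exact hq2 ((Nat.prime_dvd_prime_iff_eq hq Nat.prime_two).mp (hq.dvd_of_dvd_pow hdv))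
  set f : Fin 9 → ℕ := fun i => padicValNat q (x i) with hf
  have hb : ∀ i, f i = b i := by
    intro i
    simp only [hf]
    rw [hxeq i, padicValNat.mul (pow_ne_zero _ two_ne_zero) (pow_ne_zero _ hq.pos.ne'),
      padicValNat.eq_zero_of_not_dvd (hnd _), padicValNat.prime_pow, zero_add]
  set B : ℕ := Finset.univ.sup f with hB
  have hfB : ∀ i, f i ≤ B := fun i => Finset.le_sup (Finset.mem_univ i)
  -- B ≥ 1
  have hB1 : 1 ≤ B := by
    obtain ⟨i, hi⟩ := hdvd
    exact le_trans (one_le_padicValNat_of_dvd (hx i).ne' hi) (hfB i)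
  -- the two indices
  obtain ⟨i, j, hij, hset⟩ := Finset.card_eq_two.mp htwice
  have hmem : ∀ k : Fin 9, f k = B ↔ k ∈ ({i, j} : Finset (Fin 9)) := by
    intro k
    rw [← hset, Finset.mem_filter]
    simp [hf, hB]
  have hfi : f i = B := (hmem i).mpr (by simp)
  have hfj : f j = B := (hmem j).mpr (by simp)
  -- define N
  set N : Fin 9 → ℕ := fun k => 2 ^ (2 - a k) * q ^ (B - f k) with hN
  have hkey : ∀ k, x k * N k = 4 * q ^ B := by
    intro k
    rw [hxeq k, hN]
    have hak := ha k
    have h1 : a k + (2 - a k) = 2 := by omega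
    have h2 : b k + (B - f k) = B := by have := hfB k; rw [hb k] at this ⊢; omega
    calc 2 ^ a k * q ^ b k * (2 ^ (2 - a k) * q ^ (B - f k))
        = 2 ^ (a k + (2 - a k)) * q ^ (b k + (B - f k)) := by ring
      _ = 4 * q ^ B := by rw [h1, h2]; norm_num
  have hsumN : ∑ k, N k = 4 * q ^ B := by
    have hc : ((∑ k, N k : ℕ) : ℚ) = ((4 * q ^ B : ℕ) : ℚ) := by
      push_cast
      have : ∀ k ∈ Finset.univ, (N k : ℚ) = (4 * (q : ℚ) ^ B) * (1 / x k) := by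
        intro k _
        have hx0 : (x k : ℚ) ≠ 0 := Nat.cast_ne_zero.mpr (hx k).ne'
        have hc2 : ((x k * N k : ℕ) : ℚ) = ((4 * q ^ B : ℕ) : ℚ) := by rw [hkey k]
        push_cast at hc2
        rw [mul_one_div, eq_div_iff hx0]
        linear_combination hc2
      rw [Finset.sum_congr rfl this, ← Finset.mul_sum, hsum, mul_one]
    exact Nat.cast_injective hc
  -- divisibility
  have hrest : q ∣ ∑ k ∈ Finset.univ \ ({i, j} : Finset (Fin 9)), N k := by
    apply Finset.dvd_sum
    intro k hk
    have hk' : k ∉ ({i, j} : Finset (Fin 9)) := (Finset.mem_sdiff.mp hk).2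
    have hlt : f k < B := lt_of_le_of_ne (hfB k) (fun h => hk' ((hmem k).mp h))
    have : q ∣ q ^ (B - f k) := dvd_pow_self q (by omega)
    exact Dvd.dvd.mul_left this _
  have hsplit : ∑ k ∈ Finset.univ \ ({i, j} : Finset (Fin 9)), N k
      + ∑ k ∈ ({i, j} : Finset (Fin 9)), N k = 4 * q ^ B := by
    rw [Finset.sum_sdiff (Finset.subset_univ _), hsumN]
  have hql : q ∣ 4 * q ^ B := Dvd.dvd.mul_left (dvd_pow_self q (by omega)) _
  have hpair : q ∣ N i + N j := by
    rw [← Finset.sum_pair hij]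
    have hS : ∑ k ∈ ({i, j} : Finset (Fin 9)), N k
        = 4 * q ^ B - ∑ k ∈ Finset.univ \ ({i, j} : Finset (Fin 9)), N k := by omega
    rw [hS]
    exact Nat.dvd_sub hql hrest
  have hNi : N i = 2 ^ (2 - a i) := by simp [hN, hfi]
  have hNj : N j = 2 ^ (2 - a j) := by simp [hN, hfj]
  have hbi : b i = B := by rw [← hb i]; exact hfi
  have hbj : b j = B := by rw [← hb j]; exact hfj
  have hane : a i ≠ a j := by
    intro h
    apply hij
    apply hinj
    rw [hxeq i, hxeq j, h, hbi, hbj]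
  rw [hNi, hNj] at hpair
  exact aux_stmt13 q hq hqodd (2 - a i) (2 - a j) (by omega) (by omega)
    (by have := ha i; have := ha j; omega) hpair
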